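/- Let α be a type with decidable equality, let n m : ℕ with 1 ≤ m and m ≤ n, let t : Fin n → α, p : Fin m → α, and let a, b : α. Define polynomials P, Q over ℕ by P = Σ_{j < n} (if t j = a then 1 else 0) · X^j and Q = Σ_{j < m} (if p (m − 1 − j) = b then 1 else 0) · X^j. Then for every i ≤ n − m, the coefficient of X^{m − 1 + i} in P · Q equals the number of indices k < m with t (i + k) = a and p k = b. -/
import Mathlib


open Polynomial

lemma coeff_indicator_sum (N : ℕ) (f : Fin N → ℕ) (d : ℕ) :
    ((∑ j : Fin N, C (f j) * X ^ (j : ℕ) : Polynomial ℕ)).coeff d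
      = if h : d < N then f ⟨d, h⟩ else 0 := by
  rw [Polynomial.finset_sum_coeff]
  simp only [Polynomial.coeff_C_mul, Polynomial.coeff_X_pow]
  split
  · next h =>
    rw [Finset.sum_eq_single (⟨d, h⟩ : Fin N)]
    · simp
    · intro j _ hj
      have : d ≠ (j : ℕ) := by
        intro e
        exact hj (by ext; simp [e.symm])
      simp [this]
    · simp
  · next h =>
    apply Finset.sum_eq_zero
    intro j _
    have : d ≠ (j : ℕ) := by have := j.isLt; omega
    simp [this]

set_option maxHeartbeats 1000000 in
theorem coeff_mul_indicator_polys_eq_alignment_count {α : Type*} [DecidableEq α]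
    (n m : ℕ) (hm : 1 ≤ m) (hmn : m ≤ n) (t : Fin n → α) (p : Fin m → α) (a b : α) :
    ∀ i : ℕ, ∀ hi : i ≤ n - m,
      ((∑ j : Fin n, C (if t j = a then 1 else 0) * X ^ (j : ℕ)) *
       (∑ j : Fin m,
          C (if p ⟨m - 1 - (j : ℕ), by have := j.isLt; omega⟩ = b then 1 else 0) *
            X ^ (j : ℕ)) : Polynomial ℕ).coeff (m - 1 + i) =
      (Finset.univ.filter (fun k : Fin m =>
          t ⟨i + (k : ℕ), by have := k.isLt; omega⟩ = a ∧ p k = b)).card := by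
  intro i hi
  rw [Polynomial.coeff_mul, Finset.Nat.sum_antidiagonal_eq_sum_range_succ_mk]
  have hPc := coeff_indicator_sum n (fun j => if t j = a then 1 else 0)
  have hQc := coeff_indicator_sum m
      (fun j : Fin m => if p ⟨m - 1 - (j : ℕ), by have := j.isLt; omega⟩ = b then 1 else 0)
  simp only [hPc, hQc]
  rw [Finset.card_filter]
  rw [show (m - 1 + i).succ = i + m by omega]
  rw [Finset.range_eq_Ico, ← Finset.sum_Ico_consecutive _ (Nat.zero_le i) (by omega : i ≤ i + m)]
  have h1 : ∑ k ∈ Finset.Ico 0 i,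
      (if h : k < n then (if t ⟨k, h⟩ = a then 1 else 0) else 0) *
      (if h : m - 1 + i - k < m then
        (if p ⟨m - 1 - (m - 1 + i - k), by omega⟩ = b then 1 else 0) else 0) = 0 := by
    apply Finset.sum_eq_zero
    intro k hk
    simp only [Finset.mem_Ico] at hk
    rw [dif_neg (by omega : ¬ (m - 1 + i - k < m)), mul_zero]
  rw [h1, zero_add, Finset.sum_Ico_eq_sum_range]
  rw [show i + m - i = m by omega]
  rw [← Fin.sum_univ_eq_sum_range (fun j =>
      (if h : i + j < n then (if t ⟨i + j, h⟩ = a then 1 else 0) else 0) *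
      (if h : m - 1 + i - (i + j) < m then
        (if p ⟨m - 1 - (m - 1 + i - (i + j)), by omega⟩ = b then 1 else 0) else 0)) m]
  apply Finset.sum_congr rfl
  intro k _
  have hk := k.isLt
  rw [dif_pos (by omega : i + (k : ℕ) < n), dif_pos (by omega : m - 1 + i - (i + (k : ℕ)) < m)]
  have e1 : (⟨m - 1 - (m - 1 + i - (i + (k : ℕ))), by omega⟩ : Fin m) = k := by
    ext; simp; omega
  rw [e1]
  by_cases h1 : t ⟨i + (k : ℕ), by omega⟩ = a <;> by_cases h2 : p k = b <;>
    simp [h1, h2]
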